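/- Let f ∈ ℂ[x₁, x₂, …] be a polynomial all of whose monomials have length ℓ ≥ 1 (length = number of variable factors with multiplicity), and suppose d(f) = 0. Then for every i ≥ 1, d(δⁱ f) = i·ℓ·δ^{i−1} f; consequently the formal series ∑_{i≥0} δⁱf/(i!·ℓⁱ) is fixed coefficientwise by d, i.e. d applied to the i-th term equals the (i−1)-st term. -/

import Mathlib

open MvPolynomial

noncomputable def x (i : ℕ) : MvPolynomial ℕ ℂ := X (i - 1)

private abbrev MP := MvPolynomial ℕ ℂ

private lemma hom_nsmul (b : ℕ) (p : MP) (n : ℕ) (h : p.IsHomogeneous n) :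
    (b • p).IsHomogeneous n := by
  rw [nsmul_eq_mul, ← map_natCast (C : ℂ →+* MP)]
  exact h.C_mul _

private lemma euler_monomial (E : Derivation ℂ MP MP) (hE : ∀ j, E (X j) = X j)
    (m : ℕ →₀ ℕ) (c : ℂ) :
    E (monomial m c) = (m.sum fun _ e => e) • monomial m c := by
  induction m using Finsupp.induction with
  | zero =>
    rw [monomial_zero', Finsupp.sum_zero_index, zero_smul]
    exact (E.map_algebraMap c : _)
  | single_add j b m hjm hb ih =>
    rw [monomial_single_add, Derivation.leibniz, ih, E.leibniz_pow, hE,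
      Finsupp.sum_add_index' (fun _ => rfl) (fun _ _ _ => rfl),
      Finsupp.sum_single_index rfl]
    have hX : (X j : MP) ^ (b - 1) • (X j : MP) = X j ^ b := by
      rw [smul_eq_mul, ← pow_succ, Nat.sub_add_cancel (Nat.one_le_iff_ne_zero.2 hb)]
    rw [hX]
    simp only [smul_eq_mul, nsmul_eq_mul]
    push_cast
    ring

private lemma euler_poly (E : Derivation ℂ MP MP) (hE : ∀ j, E (X j) = X j)
    (ℓ : ℕ) (f : MP) (hlen : ∀ m ∈ f.support, (m.sum fun _ e => e) = ℓ) :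
    E f = ℓ • f := by
  conv_lhs => rw [f.as_sum]
  conv_rhs => rw [f.as_sum, Finset.smul_sum]
  rw [map_sum]
  exact Finset.sum_congr rfl fun m hm => by rw [euler_monomial E hE, hlen m hm]

private lemma homog_monomial (E : Derivation ℂ MP MP)
    (hE : ∀ j, (E (X j)).IsHomogeneous 1) (m : ℕ →₀ ℕ) (c : ℂ) :
    (E (monomial m c)).IsHomogeneous (m.sum fun _ e => e) := by
  induction m using Finsupp.induction with
  | zero =>
    have h0 : E (monomial 0 c) = 0 := by
      rw [monomial_zero']; exact (E.map_algebraMap c : _)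
    rw [h0]; exact isHomogeneous_zero _ _ _
  | single_add j b m hjm hb ih =>
    rw [monomial_single_add, Derivation.leibniz, E.leibniz_pow,
      Finsupp.sum_add_index' (fun _ => rfl) (fun _ _ _ => rfl),
      Finsupp.sum_single_index rfl]
    apply MvPolynomial.IsHomogeneous.add
    · simpa only [smul_eq_mul, add_comm] using (isHomogeneous_X_pow (R := ℂ) j b).mul ih
    · have h1 : ((X j : MP) ^ (b - 1) • E (X j)).IsHomogeneous b := by
        have := (isHomogeneous_X_pow (R := ℂ) j (b - 1)).mul (hE j)
        rw [smul_eq_mul]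
        rw [show b - 1 + 1 = b from Nat.sub_add_cancel (Nat.one_le_iff_ne_zero.2 hb)] at this
        exact this
      have h2 := (isHomogeneous_monomial (d := m) c rfl).mul (hom_nsmul b _ _ h1)
      rw [smul_eq_mul, add_comm]
      exact h2


private lemma homog_poly (E : Derivation ℂ MP MP)
    (hE : ∀ j, (E (X j)).IsHomogeneous 1) (ℓ : ℕ) (f : MP)
    (hlen : ∀ m ∈ f.support, (m.sum fun _ e => e) = ℓ) :
    (E f).IsHomogeneous ℓ := by
  conv => rw [f.as_sum]
  rw [map_sum]
  exact IsHomogeneous.sum _ _ _ fun m hm => (hlen m hm) ▸ homog_monomial E hE m _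

private lemma hlen_of {g : MP} {ℓ : ℕ} (h : g.IsHomogeneous ℓ) :
    ∀ m ∈ g.support, (m.sum fun _ e => e) = ℓ := by
  intro m hm
  rw [show (m.sum fun _ e => e) = m.degree from rfl, Finsupp.degree_eq_weight_one]
  exact h (mem_support_iff.1 hm)

theorem d_delta_iterate_of_invariant
    (d δ : Derivation ℂ (MvPolynomial ℕ ℂ) (MvPolynomial ℕ ℂ))
    (hd1 : d (x 1) = 0) (hd : ∀ i, 2 ≤ i → d (x i) = x (i - 1))
    (hδ : ∀ i, 1 ≤ i → δ (x i) = (i : MvPolynomial ℕ ℂ) * x (i + 1))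
    (ℓ : ℕ) (hℓ : 1 ≤ ℓ) (f : MvPolynomial ℕ ℂ)
    (hlen : ∀ m ∈ f.support, (m.sum fun _ e => e) = ℓ)
    (hf : d f = 0) :
    (∀ i, 1 ≤ i →
      d ((⇑δ)^[i] f) = ((i * ℓ : ℕ) : MvPolynomial ℕ ℂ) * (⇑δ)^[i - 1] f) ∧
    (∀ i, 1 ≤ i →
      d ((1 / (Nat.factorial i * ℓ ^ i : ℂ)) • (⇑δ)^[i] f)
        = (1 / (Nat.factorial (i - 1) * ℓ ^ (i - 1) : ℂ)) • (⇑δ)^[i - 1] f) := by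
  have hδX : ∀ j : ℕ, δ (X j) = ((j + 1 : ℕ) : MP) * X (j + 1) := by
    intro j
    have := hδ (j + 1) (by omega)
    simpa [x] using this
  have hdX0 : d (X 0) = 0 := hd1
  have hdX : ∀ j : ℕ, 1 ≤ j → d (X j) = X (j - 1) := by
    intro j hj
    have := hd (j + 1) (by omega)
    simpa [x] using this
  set E : Derivation ℂ MP MP := ⁅d, δ⁆ with hE
  have hEX : ∀ j, E (X j) = X j := by
    intro j
    rw [hE, Derivation.commutator_apply, hδX]
    rcases j with _ | j
    · rw [hdX0, map_zero, sub_zero, Nat.cast_one, one_mul, hdX 1 le_rfl]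
    · rw [hdX (j + 1) (by omega), hδX]
      have hc : ∀ (n : ℕ) (p : MP), d ((n : MP) * p) = (n : MP) * d p := by
        intro n p
        rw [← nsmul_eq_mul, map_nsmul, nsmul_eq_mul]
      rw [hc, hdX (j + 2) (by omega)]
      simp only [Nat.add_sub_cancel, Nat.succ_sub_one]
      push_cast
      ring
  have hδhom : ∀ j, (δ (X j)).IsHomogeneous 1 := by
    intro j
    rw [hδX, ← map_natCast (C : ℂ →+* MP)]
    exact isHomogeneous_C_mul_X _ _
  -- main induction
  have main : ∀ i, 1 ≤ i →
      d ((⇑δ)^[i] f) = ((i * ℓ : ℕ) : MP) * (⇑δ)^[i - 1] f ∧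
        ((⇑δ)^[i] f).IsHomogeneous ℓ := by
    intro i hi
    induction i, hi using Nat.le_induction with
    | base =>
      constructor
      · have h1 : E f = ℓ • f := euler_poly E hEX ℓ f hlen
        rw [hE, Derivation.commutator_apply, hf, map_zero, sub_zero] at h1
        simpa [nsmul_eq_mul] using h1
      · exact homog_poly δ hδhom ℓ f hlen
    | succ i hi ih =>
      obtain ⟨ih1, ih2⟩ := ih
      have hlen' := hlen_of ih2
      have h1 : E ((⇑δ)^[i] f) = ℓ • (⇑δ)^[i] f := euler_poly E hEX ℓ _ hlen'
      rw [hE, Derivation.commutator_apply] at h1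
      constructor
      · rw [Function.iterate_succ_apply']
        have : d (δ ((⇑δ)^[i] f)) = δ (d ((⇑δ)^[i] f)) + ℓ • (⇑δ)^[i] f := by
          rw [← h1]; ring
        rw [this, ih1]
        have hc : δ (((i * ℓ : ℕ) : MP) * (⇑δ)^[i - 1] f)
            = ((i * ℓ : ℕ) : MP) * δ ((⇑δ)^[i - 1] f) := by
          rw [← nsmul_eq_mul, map_nsmul, nsmul_eq_mul]
        have hs : δ ((⇑δ)^[i - 1] f) = (⇑δ)^[i] f := by
          conv_rhs => rw [show i = (i - 1) + 1 from (Nat.sub_add_cancel hi).symm]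
          rw [Function.iterate_succ_apply']
        rw [hc, hs, Nat.add_sub_cancel]
        rw [← nsmul_eq_mul, ← nsmul_eq_mul, ← add_nsmul]
        congr 1
        ring
      · rw [Function.iterate_succ_apply']
        exact homog_poly δ hδhom ℓ _ hlen'
  refine ⟨fun i hi => (main i hi).1, fun i hi => ?_⟩
  obtain ⟨j, rfl⟩ : ∃ j, i = j + 1 := ⟨i - 1, (Nat.sub_add_cancel hi).symm⟩
  rw [Derivation.map_smul, (main _ hi).1]
  rw [← map_natCast (C : ℂ →+* MP), C_mul', smul_smul]
  simp only [Nat.add_sub_cancel]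
  congr 1
  have hℓ0 : (ℓ : ℂ) ≠ 0 := Nat.cast_ne_zero.2 (by omega)
  have hfac : ((Nat.factorial j : ℕ) : ℂ) ≠ 0 := Nat.cast_ne_zero.2 j.factorial_ne_zero
  have hj1 : ((j : ℂ) + 1) ≠ 0 := by
    have h := Nat.cast_ne_zero (R := ℂ).2 (Nat.succ_ne_zero j)
    push_cast at h
    exact h
  rw [Nat.factorial_succ, pow_succ]
  push_cast
  field_simp
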